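/- arXiv:2111.14476 — 8 statements merged into one kernel-verified Lean document; each statement's English description precedes it below -/
import Mathlib

section
/- Let r₀ = 12^(−1/4) and t₀ = √(11/12). The four points p₁ = (r₀, 0), p₂ = (r₀·e^{2πi/3}, 0), p₃ = (r₀·e^{−2πi/3}, 0), p₄ = (0, t₀) of ℂ × ℝ are pairwise at Korányi distance 1. -/
open Complex Real

/-- The Korányi (Heisenberg) distance on ℂ × ℝ. -/
noncomputable def kd (p q : ℂ × ℝ) : ℝ :=
  ((‖p.1 - q.1‖) ^ 4 +
    (p.2 - q.2 + 2 * (p.1 * (starRingEnd ℂ) q.1).im) ^ 2) ^ ((1 : ℝ) / 4)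

lemma kd_eq (p q : ℂ × ℝ) :
    kd p q = (((p.1.re - q.1.re) ^ 2 + (p.1.im - q.1.im) ^ 2) ^ 2 +
      (p.2 - q.2 + 2 * (p.1.im * q.1.re - p.1.re * q.1.im)) ^ 2) ^ ((1 : ℝ) / 4) := by
  unfold kd
  congr 1
  have h1 : (‖p.1 - q.1‖) ^ 4 = (Complex.normSq (p.1 - q.1)) ^ 2 := by
    rw [show (4 : ℕ) = 2 * 2 by rfl, pow_mul, Complex.sq_norm]
  rw [h1]
  simp [Complex.normSq_apply, Complex.mul_im, Complex.sub_re, Complex.sub_im]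
  ring

theorem canonical_four_equilateral :
    let r₀ : ℝ := (12 : ℝ) ^ (-(1 : ℝ) / 4)
    let t₀ : ℝ := Real.sqrt (11 / 12)
    let p₁ : ℂ × ℝ := ((r₀ : ℂ), 0)
    let p₂ : ℂ × ℝ := ((r₀ : ℂ) * Complex.exp (2 * (Real.pi : ℂ) * Complex.I / 3), 0)
    let p₃ : ℂ × ℝ := ((r₀ : ℂ) * Complex.exp (-(2 * (Real.pi : ℂ) * Complex.I) / 3), 0)
    let p₄ : ℂ × ℝ := (0, t₀)
    kd p₁ p₂ = 1 ∧ kd p₁ p₃ = 1 ∧ kd p₁ p₄ = 1 ∧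
    kd p₂ p₃ = 1 ∧ kd p₂ p₄ = 1 ∧ kd p₃ p₄ = 1 := by
  intro r₀ t₀ p₁ p₂ p₃ p₄
  set s : ℝ := Real.sqrt 3 with hs_def
  have hs : s ^ 2 = 3 := Real.sq_sqrt (by norm_num)
  have hr4 : r₀ ^ (4 : ℕ) = 1 / 12 := by
    rw [show r₀ = (12 : ℝ) ^ (-(1 : ℝ) / 4) from rfl,
      ← Real.rpow_natCast ((12 : ℝ) ^ (-(1 : ℝ) / 4)) 4,
      ← Real.rpow_mul (by norm_num : (0:ℝ) ≤ 12)]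
    norm_num
  have ht : t₀ ^ 2 = 11 / 12 := Real.sq_sqrt (by norm_num)
  have hcos : Real.cos (2 * π / 3) = -(1 / 2) := by
    rw [show 2 * π / 3 = π - π / 3 by ring, Real.cos_pi_sub, Real.cos_pi_div_three]
  have hsin : Real.sin (2 * π / 3) = s / 2 := by
    rw [show 2 * π / 3 = π - π / 3 by ring, Real.sin_pi_sub, Real.sin_pi_div_three]
  have he2 : Complex.exp (2 * (Real.pi : ℂ) * Complex.I / 3) =
      Complex.mk (-(1 / 2)) (s / 2) := by
    rw [show 2 * (Real.pi : ℂ) * Complex.I / 3 = ((2 * π / 3 : ℝ) : ℂ) * Complex.I by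
      push_cast; ring, Complex.exp_mul_I, ← Complex.ofReal_cos, ← Complex.ofReal_sin]
    rw [hcos, hsin]
    apply Complex.ext <;> simp
  have he3 : Complex.exp (-(2 * (Real.pi : ℂ) * Complex.I) / 3) =
      Complex.mk (-(1 / 2)) (-(s / 2)) := by
    rw [show -(2 * (Real.pi : ℂ) * Complex.I) / 3 = ((-(2 * π / 3) : ℝ) : ℂ) * Complex.I by
      push_cast; ring, Complex.exp_mul_I, ← Complex.ofReal_cos, ← Complex.ofReal_sin]
    rw [Real.cos_neg, Real.sin_neg, hcos, hsin]
    apply Complex.ext <;> simp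
  have hA : r₀ ^ 4 * s ^ 2 = 1 / 4 := by rw [hs, hr4]; norm_num
  have hB : r₀ ^ 4 * s ^ 4 = 3 / 4 := by
    rw [show s ^ 4 = (s ^ 2) ^ 2 by ring, hs, hr4]; norm_num
  have key : ∀ x : ℝ, x = 1 → x ^ ((1:ℝ)/4) = 1 := by
    rintro x rfl; exact Real.one_rpow _
  refine ⟨?_, ?_, ?_, ?_, ?_, ?_⟩ <;>
    rw [kd_eq] <;>
    simp only [p₁, p₂, p₃, p₄, he2, he3, Complex.mul_re, Complex.mul_im,
      Complex.ofReal_re, Complex.ofReal_im, Complex.zero_re, Complex.zero_im] <;>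
    apply key <;>
    ring_nf <;>
    linarith [hr4, ht, hA, hB]
end

section
/- Let r₀ = 12^(−1/4). The three points (r₀, 0), (r₀·e^{2πi/3}, 0), (r₀·e^{−2πi/3}, 0) of ℂ × ℝ, lying on the planar circle of radius r₀ centred at the origin, are pairwise at Korányi distance 1. -/
open Complex Real

lemma kd_one (z w : ℂ)
    (h : Complex.normSq (z - w) ^ 2 + (2 * (z * (starRingEnd ℂ) w).im) ^ 2 = 1) :
    kd (z, 0) (w, 0) = 1 := by
  unfold kd
  simp only [sub_zero, zero_sub, neg_zero, zero_add]
  rw [show (4 : ℕ) = 2 * 2 from rfl, pow_mul, Complex.sq_norm, h, Real.one_rpow]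

theorem canonical_three_equilateral :
    let r₀ : ℝ := (12 : ℝ) ^ (-(1 : ℝ) / 4)
    let p₁ : ℂ × ℝ := ((r₀ : ℂ), 0)
    let p₂ : ℂ × ℝ := ((r₀ : ℂ) * Complex.exp (2 * (Real.pi : ℂ) * Complex.I / 3), 0)
    let p₃ : ℂ × ℝ := ((r₀ : ℂ) * Complex.exp (-(2 * (Real.pi : ℂ) * Complex.I) / 3), 0)
    kd p₁ p₂ = 1 ∧ kd p₁ p₃ = 1 ∧ kd p₂ p₃ = 1 := by
  intro r₀ p₁ p₂ p₃
  have hr4 : r₀ ^ (4 : ℕ) = 1 / 12 := by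
    show ((12:ℝ) ^ (-(1:ℝ)/4)) ^ (4:ℕ) = 1/12
    rw [← Real.rpow_natCast ((12:ℝ)^(-(1:ℝ)/4)) 4, ← Real.rpow_mul (by norm_num)]
    norm_num
  have hc : Real.cos (2 * Real.pi / 3) = -(1 / 2) := by
    rw [show 2*Real.pi/3 = Real.pi - Real.pi/3 by ring, Real.cos_pi_sub,
      Real.cos_pi_div_three]
  have hs : Real.sin (2 * Real.pi / 3) = Real.sqrt 3 / 2 := by
    rw [show 2*Real.pi/3 = Real.pi - Real.pi/3 by ring, Real.sin_pi_sub,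
      Real.sin_pi_div_three]
  have hs3 : Real.sqrt 3 ^ 2 = 3 := Real.sq_sqrt (by norm_num)
  have he2 : Complex.exp (2 * (Real.pi : ℂ) * Complex.I / 3) =
      ((-(1/2) : ℝ) : ℂ) + ((Real.sqrt 3 / 2 : ℝ) : ℂ) * Complex.I := by
    rw [show 2 * (Real.pi : ℂ) * Complex.I / 3 = ((2*Real.pi/3 : ℝ):ℂ) * Complex.I by
      push_cast; ring, Complex.exp_mul_I, ← Complex.ofReal_cos, ← Complex.ofReal_sin, hc, hs]
  have he3 : Complex.exp (-(2 * (Real.pi : ℂ) * Complex.I) / 3) =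
      ((-(1/2) : ℝ) : ℂ) - ((Real.sqrt 3 / 2 : ℝ) : ℂ) * Complex.I := by
    rw [show -(2 * (Real.pi : ℂ) * Complex.I) / 3 = ((-(2*Real.pi/3) : ℝ):ℂ) * Complex.I by
      push_cast; ring, Complex.exp_mul_I, ← Complex.ofReal_cos, ← Complex.ofReal_sin,
      Real.cos_neg, Real.sin_neg, hc, hs]
    push_cast; ring
  refine ⟨kd_one _ _ ?_, kd_one _ _ ?_, kd_one _ _ ?_⟩ <;>
    simp only [he2, he3, Complex.normSq_apply, Complex.sub_re, Complex.sub_im,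
      Complex.mul_re, Complex.mul_im, Complex.add_re, Complex.add_im,
      Complex.ofReal_re, Complex.ofReal_im, Complex.I_re, Complex.I_im,
      Complex.conj_re, Complex.conj_im, map_sub, map_add, map_mul, Complex.conj_I,
      Complex.conj_ofReal, Complex.neg_re, Complex.neg_im] <;>
    ring_nf <;>
    rw [show (Real.sqrt 3) ^ 4 = ((Real.sqrt 3) ^ 2) ^ 2 by ring, hs3] <;>
    linarith [hr4]
end

section
/- Let r₀ = 12^(−1/4), t₀ = √(11/12), and let S₃ = {(r₀, 0), (r₀·e^{2πi/3}, 0), (r₀·e^{−2πi/3}, 0)} ⊆ ℂ × ℝ. A point p ∈ ℂ × ℝ satisfies d(p, q) = 1 for all q ∈ S₃ (with respect to the Korányi distance d) if and only if p = (0, t₀) or p = (0, −t₀). -/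
open Complex Real

lemma kd_eq_one_iff (p q : ℂ × ℝ) :
    kd p q = 1 ↔ (‖p.1 - q.1‖) ^ 4 +
      (p.2 - q.2 + 2 * (p.1 * (starRingEnd ℂ) q.1).im) ^ 2 = 1 := by
  unfold kd
  constructor
  · intro h
    set A := (‖p.1 - q.1‖) ^ 4 +
      (p.2 - q.2 + 2 * (p.1 * (starRingEnd ℂ) q.1).im) ^ 2 with hAdef
    have hA : 0 ≤ A := by positivity
    have h4 : (A ^ ((1:ℝ)/4)) ^ (4:ℝ) = 1 := by rw [h, Real.one_rpow]
    rw [← Real.rpow_mul hA] at h4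
    norm_num at h4
    exact h4
  · intro h; rw [h, Real.one_rpow]

lemma kd_key (z : ℂ) (t : ℝ) (w : ℂ) (h : kd (z, t) (w, 0) = 1) :
    ((z.re - w.re) ^ 2 + (z.im - w.im) ^ 2) ^ 2 +
      (t + 2 * (z.im * w.re - z.re * w.im)) ^ 2 = 1 := by
  have H := (kd_eq_one_iff (z, t) (w, 0)).mp h
  simp only [Complex.mul_im, Complex.conj_re, Complex.conj_im] at H
  have habs : (‖z - w‖) ^ 4 = ((z.re - w.re) ^ 2 + (z.im - w.im) ^ 2) ^ 2 := by
    rw [show (4 : ℕ) = 2 * 2 from rfl, pow_mul, Complex.sq_norm, Complex.normSq_apply,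
      Complex.sub_re, Complex.sub_im]
    ring
  rw [habs] at H
  linear_combination H

lemma kd_key' (z : ℂ) (t : ℝ) (w : ℂ)
    (h : ((z.re - w.re) ^ 2 + (z.im - w.im) ^ 2) ^ 2 +
      (t + 2 * (z.im * w.re - z.re * w.im)) ^ 2 = 1) : kd (z, t) (w, 0) = 1 := by
  rw [kd_eq_one_iff]
  simp only [Complex.mul_im, Complex.conj_re, Complex.conj_im]
  have habs : (‖z - w‖) ^ 4 = ((z.re - w.re) ^ 2 + (z.im - w.im) ^ 2) ^ 2 := by
    rw [show (4 : ℕ) = 2 * 2 from rfl, pow_mul, Complex.sq_norm, Complex.normSq_apply,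
      Complex.sub_re, Complex.sub_im]
    ring
  rw [habs]
  linear_combination h

lemma exp_re1 : (Complex.exp (2 * (Real.pi : ℂ) * Complex.I / 3)).re = -(1 / 2) := by
  have h1 : 2 * (Real.pi : ℂ) * Complex.I / 3 = ((2 * Real.pi / 3 : ℝ) : ℂ) * Complex.I := by
    push_cast; ring
  rw [h1, Complex.exp_ofReal_mul_I_re]
  have h2 : (2 * Real.pi / 3 : ℝ) = Real.pi - Real.pi / 3 := by ring
  rw [h2, Real.cos_pi_sub, Real.cos_pi_div_three]

lemma exp_im1 : (Complex.exp (2 * (Real.pi : ℂ) * Complex.I / 3)).im = Real.sqrt 3 / 2 := by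
  have h1 : 2 * (Real.pi : ℂ) * Complex.I / 3 = ((2 * Real.pi / 3 : ℝ) : ℂ) * Complex.I := by
    push_cast; ring
  rw [h1, Complex.exp_ofReal_mul_I_im]
  have h2 : (2 * Real.pi / 3 : ℝ) = Real.pi - Real.pi / 3 := by ring
  rw [h2, Real.sin_pi_sub, Real.sin_pi_div_three]

lemma exp_re2 : (Complex.exp (-(2 * (Real.pi : ℂ) * Complex.I) / 3)).re = -(1 / 2) := by
  have h1 : -(2 * (Real.pi : ℂ) * Complex.I) / 3 = ((-(2 * Real.pi / 3) : ℝ) : ℂ) * Complex.I := by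
    push_cast; ring
  rw [h1, Complex.exp_ofReal_mul_I_re, Real.cos_neg]
  have h2 : (2 * Real.pi / 3 : ℝ) = Real.pi - Real.pi / 3 := by ring
  rw [h2, Real.cos_pi_sub, Real.cos_pi_div_three]

lemma exp_im2 : (Complex.exp (-(2 * (Real.pi : ℂ) * Complex.I) / 3)).im = -(Real.sqrt 3 / 2) := by
  have h1 : -(2 * (Real.pi : ℂ) * Complex.I) / 3 = ((-(2 * Real.pi / 3) : ℝ) : ℂ) * Complex.I := by
    push_cast; ring
  rw [h1, Complex.exp_ofReal_mul_I_im, Real.sin_neg]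
  have h2 : (2 * Real.pi / 3 : ℝ) = Real.pi - Real.pi / 3 := by ring
  rw [h2, Real.sin_pi_sub, Real.sin_pi_div_three]

theorem equidistant_from_canonical_three (p : ℂ × ℝ) :
    let r₀ : ℝ := (12 : ℝ) ^ (-(1 : ℝ) / 4)
    let t₀ : ℝ := Real.sqrt (11 / 12)
    let S₃ : Set (ℂ × ℝ) :=
      {((r₀ : ℂ), 0), ((r₀ : ℂ) * Complex.exp (2 * (Real.pi : ℂ) * Complex.I / 3), 0),
        ((r₀ : ℂ) * Complex.exp (-(2 * (Real.pi : ℂ) * Complex.I) / 3), 0)}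
    ((∀ q ∈ S₃, kd p q = 1) ↔ p = ((0 : ℂ), t₀) ∨ p = ((0 : ℂ), -t₀)) := by
  intro r₀ t₀ S₃
  obtain ⟨z, t⟩ := p
  set r : ℝ := r₀ with hrdef
  set s : ℝ := Real.sqrt 3 with hsdef
  have hr : 0 < r := Real.rpow_pos_of_pos (by norm_num) _
  have hr4 : r ^ 4 = 1 / 12 := by
    rw [hrdef]
    rw [show r₀ = (12 : ℝ) ^ (-(1 : ℝ) / 4) from rfl, ← Real.rpow_natCast _ 4,
      ← Real.rpow_mul (by norm_num : (0:ℝ) ≤ 12)]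
    norm_num
  have hs0 : 0 ≤ s := Real.sqrt_nonneg 3
  have hs2 : s ^ 2 = 3 := Real.sq_sqrt (by norm_num)
  have hs : 0 < s := by nlinarith
  have ht0 : t₀ ^ 2 = 11 / 12 := Real.sq_sqrt (by norm_num)
  -- component values of the three points
  set w0 : ℂ := (r₀ : ℂ) with hw0
  set w1 : ℂ := (r₀ : ℂ) * Complex.exp (2 * (Real.pi : ℂ) * Complex.I / 3) with hw1
  set w2 : ℂ := (r₀ : ℂ) * Complex.exp (-(2 * (Real.pi : ℂ) * Complex.I) / 3) with hw2
  have hw0re : w0.re = r := by simp [hw0, hrdef]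
  have hw0im : w0.im = 0 := by simp [hw0]
  have hw1re : w1.re = -(r / 2) := by
    rw [hw1, Complex.mul_re, Complex.ofReal_re, Complex.ofReal_im, exp_re1]; ring
  have hw1im : w1.im = r * s / 2 := by
    rw [hw1, Complex.mul_im, Complex.ofReal_re, Complex.ofReal_im, exp_im1]; ring
  have hw2re : w2.re = -(r / 2) := by
    rw [hw2, Complex.mul_re, Complex.ofReal_re, Complex.ofReal_im, exp_re2]; ring
  have hw2im : w2.im = -(r * s / 2) := by
    rw [hw2, Complex.mul_im, Complex.ofReal_re, Complex.ofReal_im, exp_im2]; ring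
  constructor
  · intro h
    have e0 := kd_key z t w0 (h (w0, 0) (by simp [S₃, hw0]))
    have e1 := kd_key z t w1 (h (w1, 0) (by simp [S₃, hw1]))
    have e2 := kd_key z t w2 (h (w2, 0) (by simp [S₃, hw2]))
    rw [hw0re, hw0im] at e0
    rw [hw1re, hw1im] at e1
    rw [hw2re, hw2im] at e2
    set x : ℝ := z.re with hx
    set y : ℝ := z.im with hy
    -- linear relations
    have hX : 12 * r * ((x ^ 2 + y ^ 2 + r ^ 2) * x - t * y) = 0 := by
      linear_combination e1 + e2 - 2 * e0 -
        (3 * r ^ 2 * x ^ 2 + 3 * r ^ 2 * y ^ 2 + r ^ 3 * x + r ^ 4 * (s ^ 2 + 5) / 8) * hs2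
    have hY : 4 * r * s * ((x ^ 2 + y ^ 2 + r ^ 2) * y + t * x) = 0 := by
      linear_combination e2 - e1 - r ^ 3 * s * y * hs2
    have hX' : (x ^ 2 + y ^ 2 + r ^ 2) * x - t * y = 0 := by
      have h12 : (12 : ℝ) * r ≠ 0 := by positivity
      exact (mul_eq_zero.mp hX).resolve_left h12
    have hY' : (x ^ 2 + y ^ 2 + r ^ 2) * y + t * x = 0 := by
      have h4 : (4 : ℝ) * r * s ≠ 0 := by positivity
      exact (mul_eq_zero.mp hY).resolve_left h4
    have hcpos : (0:ℝ) < ((x ^ 2 + y ^ 2 + r ^ 2) ^ 2 + t ^ 2) := by positivity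
    have hx0 : x = 0 := by
      have hxx : ((x ^ 2 + y ^ 2 + r ^ 2) ^ 2 + t ^ 2) * x = 0 := by
        linear_combination (x ^ 2 + y ^ 2 + r ^ 2) * hX' + t * hY'
      exact (mul_eq_zero.mp hxx).resolve_left (ne_of_gt hcpos)
    have hy0 : y = 0 := by
      have hyy : ((x ^ 2 + y ^ 2 + r ^ 2) ^ 2 + t ^ 2) * y = 0 := by
        linear_combination (x ^ 2 + y ^ 2 + r ^ 2) * hY' - t * hX'
      exact (mul_eq_zero.mp hyy).resolve_left (ne_of_gt hcpos)
    have hz0 : z = 0 := by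
      apply Complex.ext <;> simp [← hx, ← hy, hx0, hy0]
    have ht2 : t ^ 2 = 11 / 12 := by
      rw [hx0, hy0] at e0
      linear_combination e0 - hr4
    have hfac : (t - t₀) * (t + t₀) = 0 := by linear_combination ht2 - ht0
    rcases mul_eq_zero.mp hfac with h' | h'
    · exact Or.inl (Prod.ext_iff.mpr ⟨hz0, show t = t₀ by linarith⟩)
    · exact Or.inr (Prod.ext_iff.mpr ⟨hz0, show t = -t₀ by linarith⟩)
  · intro h q hq
    have hzt : z = 0 ∧ (t = t₀ ∨ t = -t₀) := by
      rcases h with h | h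
      · exact ⟨(Prod.ext_iff.mp h).1, Or.inl (Prod.ext_iff.mp h).2⟩
      · exact ⟨(Prod.ext_iff.mp h).1, Or.inr (Prod.ext_iff.mp h).2⟩
    obtain ⟨hz0, htr⟩ := hzt
    have hxr : z.re = 0 := by rw [hz0]; simp
    have hyr : z.im = 0 := by rw [hz0]; simp
    have ht2 : t ^ 2 = 11 / 12 := by
      rcases htr with h' | h'
      · rw [h']; exact ht0
      · rw [h', neg_sq]; exact ht0
    have main : ∀ w : ℂ, w.re ^ 2 + w.im ^ 2 = r ^ 2 → kd (z, t) (w, 0) = 1 := by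
      intro w hw
      apply kd_key'
      rw [hxr, hyr]
      have : ((0 - w.re) ^ 2 + (0 - w.im) ^ 2) ^ 2 = r ^ 4 := by
        rw [show ((0:ℝ) - w.re) ^ 2 + (0 - w.im) ^ 2 = w.re ^ 2 + w.im ^ 2 by ring, hw]; ring
      rw [this]
      rw [hr4]
      linear_combination ht2
    simp only [S₃, Set.mem_insert_iff, Set.mem_singleton_iff] at hq
    rcases hq with h' | h' | h' <;> rw [h']
    · exact main w0 (by rw [hw0re, hw0im]; ring)
    · exact main w1 (by rw [hw1re, hw1im]; nlinarith [hs2])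
    · exact main w2 (by rw [hw2re, hw2im]; nlinarith [hs2])
end

section
/- Every set S ⊆ ℂ × ℝ containing the two points (0, −1/2) and (0, 1/2) whose distinct points are pairwise at Korányi distance 1 has at most 4 elements. -/
open Complex Real

lemma kd_pow (p q : ℂ × ℝ) (h : kd p q = 1) :
    (‖p.1 - q.1‖) ^ 4 +
      (p.2 - q.2 + 2 * (p.1 * (starRingEnd ℂ) q.1).im) ^ 2 = 1 := by
  unfold kd at h
  set A := (‖p.1 - q.1‖) ^ 4 +
      (p.2 - q.2 + 2 * (p.1 * (starRingEnd ℂ) q.1).im) ^ 2 with hA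
  have hA0 : 0 ≤ A := by positivity
  have h4 : (A ^ ((1:ℝ)/4)) ^ (4:ℕ) = A := by
    rw [← Real.rpow_natCast (A ^ ((1:ℝ)/4)) 4, ← Real.rpow_mul hA0]
    norm_num
  rw [h] at h4
  simpa using h4.symm

lemma abs4 (w : ℂ) : ‖w‖ ^ 4 = Complex.normSq w ^ 2 := by
  rw [show (4:ℕ) = 2*2 from rfl, pow_mul, Complex.sq_norm]

lemma pair_facts {z w : ℂ} (hz : Complex.normSq z ^ 2 = 3/4)
    (hw : Complex.normSq w ^ 2 = 3/4)
    (hE : Complex.normSq (z - w) ^ 2 + (2 * (z * (starRingEnd ℂ) w).im) ^ 2 = 1) :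
    (z * (starRingEnd ℂ) w).im ^ 2 = 11/48 ∧
      Complex.normSq z * (z * (starRingEnd ℂ) w).re = 5/8 := by
  set x := (z * (starRingEnd ℂ) w).re with hx
  set y := (z * (starRingEnd ℂ) w).im with hy
  have hzw : Complex.normSq z = Complex.normSq w := by
    nlinarith [Complex.normSq_nonneg z, Complex.normSq_nonneg w]
  have hC : x ^ 2 + y ^ 2 = Complex.normSq z * Complex.normSq w := by
    have h1 : Complex.normSq (z * (starRingEnd ℂ) w)
        = Complex.normSq z * Complex.normSq w := by
      rw [Complex.normSq_mul, Complex.normSq_conj]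
    rw [← h1, Complex.normSq_apply]; ring
  rw [Complex.normSq_sub] at hE
  set s := Complex.normSq z with hs
  have hC' : x ^ 2 + y ^ 2 = s * s := by rw [hC, ← hzw]
  rw [← hzw, ← hx] at hE
  have hsx : s * x = 5/8 := by nlinarith
  have h2 : (s * x) ^ 2 = 25/64 := by rw [hsx]; norm_num
  have hx2 : x ^ 2 * (3/4) = 25/64 := by
    calc x ^ 2 * (3/4) = x ^ 2 * s ^ 2 := by rw [hz]
      _ = (s * x) ^ 2 := by ring
      _ = 25/64 := h2
  have hy2 : y ^ 2 = 11/48 := by nlinarith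
  exact ⟨hy2, hsx⟩

lemma triple_im (z₁ z₂ z₃ : ℂ) :
    (z₁ * (starRingEnd ℂ) z₂).re * (z₂ * (starRingEnd ℂ) z₃).im
      + (z₁ * (starRingEnd ℂ) z₂).im * (z₂ * (starRingEnd ℂ) z₃).re
      = Complex.normSq z₂ * (z₁ * (starRingEnd ℂ) z₃).im := by
  have h : (z₁ * (starRingEnd ℂ) z₂) * (z₂ * (starRingEnd ℂ) z₃)
      = (Complex.normSq z₂ : ℂ) * (z₁ * (starRingEnd ℂ) z₃) := by
    rw [← Complex.mul_conj z₂]; ring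
  simp only [Complex.mul_im, Complex.mul_re, Complex.conj_re, Complex.conj_im,
    Complex.normSq_apply]
  ring

theorem equilateral_set_containing_vertical_pair (S : Set (ℂ × ℝ))
    (h₁ : ((0 : ℂ), (-1 / 2 : ℝ)) ∈ S) (h₂ : ((0 : ℂ), (1 / 2 : ℝ)) ∈ S)
    (hS : ∀ p ∈ S, ∀ q ∈ S, p ≠ q → kd p q = 1) :
    S.encard ≤ 4 := by
  classical
  set P : ℂ × ℝ := ((0:ℂ), (-1/2 : ℝ)) with hP
  set Q : ℂ × ℝ := ((0:ℂ), (1/2 : ℝ)) with hQ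
  have extra : ∀ a ∈ S, a ≠ P → a ≠ Q → a.2 = 0 ∧ Complex.normSq a.1 ^ 2 = 3/4 := by
    intro a ha hne1 hne2
    have e1 := kd_pow a P (hS a ha P h₁ hne1)
    have e2 := kd_pow a Q (hS a ha Q h₂ hne2)
    simp only [hP, hQ, map_zero, mul_zero, Complex.zero_im, sub_zero, add_zero] at e1 e2
    rw [abs4] at e1 e2
    have ht : a.2 = 0 := by nlinarith
    refine ⟨ht, ?_⟩
    rw [ht] at e1
    nlinarith
  have key : (S \ {P, Q}).encard ≤ 2 := by
    by_contra hcon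
    have h3 : (3 : ℕ∞) ≤ (S \ {P, Q}).encard := Order.add_one_le_of_lt (not_le.mp hcon)
    obtain ⟨t, hts, ht3⟩ := Set.exists_subset_encard_eq h3
    obtain ⟨a, b, c, hab, hac, hbc, rfl⟩ := Set.encard_eq_three.mp ht3
    have ha := hts (by simp : a ∈ ({a,b,c} : Set (ℂ × ℝ)))
    have hb := hts (by simp : b ∈ ({a,b,c} : Set (ℂ × ℝ)))
    have hc := hts (by simp : c ∈ ({a,b,c} : Set (ℂ × ℝ)))
    obtain ⟨haS, haPQ⟩ := ha
    obtain ⟨hbS, hbPQ⟩ := hb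
    obtain ⟨hcS, hcPQ⟩ := hc
    simp only [Set.mem_insert_iff, Set.mem_singleton_iff, not_or] at haPQ hbPQ hcPQ
    obtain ⟨ta, na⟩ := extra a haS haPQ.1 haPQ.2
    obtain ⟨tb, nb⟩ := extra b hbS hbPQ.1 hbPQ.2
    obtain ⟨tc, nc⟩ := extra c hcS hcPQ.1 hcPQ.2
    have pairE : ∀ u ∈ S, ∀ v ∈ S, u ≠ v → u.2 = 0 → v.2 = 0 →
        Complex.normSq (u.1 - v.1) ^ 2 + (2 * (u.1 * (starRingEnd ℂ) v.1).im) ^ 2 = 1 := by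
      intro u hu v hv huv hu2 hv2
      have e := kd_pow u v (hS u hu v hv huv)
      rw [abs4, hu2, hv2] at e
      simpa using e
    obtain ⟨yab, xab⟩ := pair_facts na nb (pairE a haS b hbS hab ta tb)
    obtain ⟨ybc, xbc⟩ := pair_facts nb nc (pairE b hbS c hcS hbc tb tc)
    obtain ⟨yac, xac⟩ := pair_facts na nc (pairE a haS c hcS hac ta tc)
    have hsab : Complex.normSq a.1 = Complex.normSq b.1 := by
      nlinarith [Complex.normSq_nonneg a.1, Complex.normSq_nonneg b.1]
    set s := Complex.normSq b.1 with hs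
    rw [hsab] at xab xac na
    have rel := triple_im a.1 b.1 c.1
    have h5 : (5/8) * (b.1 * (starRingEnd ℂ) c.1).im
        + (5/8) * (a.1 * (starRingEnd ℂ) b.1).im
        = (3/4) * (a.1 * (starRingEnd ℂ) c.1).im := by
      calc (5/8) * (b.1 * (starRingEnd ℂ) c.1).im
            + (5/8) * (a.1 * (starRingEnd ℂ) b.1).im
          = (s * (a.1 * (starRingEnd ℂ) b.1).re) * (b.1 * (starRingEnd ℂ) c.1).im
            + (s * (b.1 * (starRingEnd ℂ) c.1).re) * (a.1 * (starRingEnd ℂ) b.1).im := by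
            rw [xab, xbc]
        _ = s * ((a.1 * (starRingEnd ℂ) b.1).re * (b.1 * (starRingEnd ℂ) c.1).im
            + (a.1 * (starRingEnd ℂ) b.1).im * (b.1 * (starRingEnd ℂ) c.1).re) := by ring
        _ = s * (s * (a.1 * (starRingEnd ℂ) c.1).im) := by rw [rel]
        _ = s ^ 2 * (a.1 * (starRingEnd ℂ) c.1).im := by ring
        _ = (3/4) * (a.1 * (starRingEnd ℂ) c.1).im := by rw [na]
    set u := (a.1 * (starRingEnd ℂ) b.1).im
    set v := (b.1 * (starRingEnd ℂ) c.1).im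
    set w := (a.1 * (starRingEnd ℂ) c.1).im
    have h6 : 5 * u + 5 * v = 6 * w := by linarith
    have h7 : (5 * u + 5 * v) ^ 2 = (6 * w) ^ 2 := by rw [h6]
    have huv : u * v = -77/1200 := by nlinarith [h7, yab, ybc, yac]
    have hfin : (u * v) ^ 2 = u ^ 2 * v ^ 2 := by ring
    rw [huv, yab, ybc] at hfin
    norm_num at hfin
  have hPQ : P ≠ Q := by
    norm_num [hP, hQ, Prod.ext_iff]
  have hSsub : S ⊆ ({P, Q} : Set (ℂ × ℝ)) ∪ (S \ {P, Q}) := by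
    intro x hx
    by_cases h : x ∈ ({P, Q} : Set (ℂ × ℝ))
    · exact Or.inl h
    · exact Or.inr ⟨hx, h⟩
  calc S.encard ≤ (({P, Q} : Set (ℂ × ℝ)) ∪ (S \ {P, Q})).encard := Set.encard_mono hSsub
    _ ≤ ({P, Q} : Set (ℂ × ℝ)).encard + (S \ {P, Q}).encard := Set.encard_union_le _ _
    _ ≤ 2 + 2 := add_le_add (le_of_eq (Set.encard_pair hPQ)) key
    _ = 4 := by norm_num
end

section
/- Let θ* = arccos(5/2 − √6) and define f(θ) = (1 + 6·cos θ) / (8·√(cos θ)·cos(θ/2)) for θ ∈ [−θ*, θ*]. Then for all θ ∈ [−θ*, θ*] one has √(5/8) ≤ f(θ) ≤ 1; moreover f attains the value 1 exactly at θ = ±θ* and attains the value √(5/8) exactly at θ = ±arccos(1/4). -/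
open Complex Real

private lemma s6_sq : Real.sqrt 6 ^ 2 = 6 := Real.sq_sqrt (by norm_num)

private lemma s6_lb : (2:ℝ) ≤ Real.sqrt 6 := by
  nlinarith [Real.sqrt_nonneg 6, s6_sq]

private lemma s6_ub : Real.sqrt 6 < 5/2 := by
  nlinarith [Real.sqrt_nonneg 6, s6_sq]

private lemma cstar_pos : (0:ℝ) < 5/2 - Real.sqrt 6 := by linarith [s6_ub]

private lemma cos_thetastar :
    Real.cos (Real.arccos (5/2 - Real.sqrt 6)) = 5/2 - Real.sqrt 6 :=
  Real.cos_arccos (by linarith [s6_ub]) (by linarith [s6_lb])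

/-- Shared setup facts for θ in the interval. -/
private lemma setup (θ : ℝ)
    (h : θ ∈ Set.Icc (-(Real.arccos (5/2 - Real.sqrt 6))) (Real.arccos (5/2 - Real.sqrt 6))) :
    (5/2 - Real.sqrt 6 ≤ Real.cos θ) ∧ (Real.cos θ ≤ 1) ∧ (0 < Real.cos θ) ∧
    ((1 + 6 * Real.cos θ) / (8 * Real.sqrt (Real.cos θ) * Real.cos (θ / 2))
       = (1 + 6 * Real.cos θ) / Real.sqrt (32 * Real.cos θ * (1 + Real.cos θ))) ∧
    |θ| ≤ π := by
  have habs : |θ| ≤ Real.arccos (5/2 - Real.sqrt 6) := abs_le.2 h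
  have hpi : Real.arccos (5/2 - Real.sqrt 6) ≤ π := Real.arccos_le_pi _
  have hpi2 : Real.arccos (5/2 - Real.sqrt 6) ≤ π/2 :=
    Real.arccos_le_pi_div_two.2 (le_of_lt cstar_pos)
  have habspi : |θ| ≤ π := habs.trans hpi
  have h1 : 5/2 - Real.sqrt 6 ≤ Real.cos θ := by
    have := Real.cos_le_cos_of_nonneg_of_le_pi (abs_nonneg θ) hpi habs
    rwa [cos_thetastar, Real.cos_abs] at this
  have hcpos : 0 < Real.cos θ := lt_of_lt_of_le cstar_pos h1
  have hhalfpos : 0 < Real.cos (θ/2) := by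
    apply Real.cos_pos_of_mem_Ioo
    constructor
    · have : -(π/2) ≤ -(π/4) := by norm_num [Real.pi_pos.le]; linarith [Real.pi_pos]
      have h2 : -(π/4) ≤ θ/2 := by
        have := (abs_le.1 habs).1
        have : -(π/2) ≤ θ := le_trans (by linarith) this
        linarith [Real.pi_pos]
      linarith [Real.pi_pos]
    · have : θ ≤ π/2 := le_trans (abs_le.1 habs).2 hpi2
      linarith [Real.pi_pos]
  have hsq : (8 * Real.sqrt (Real.cos θ) * Real.cos (θ/2))^2
      = 32 * Real.cos θ * (1 + Real.cos θ) := by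
    have hh := Real.cos_sq (θ/2)
    rw [show 2*(θ/2) = θ by ring] at hh
    have h2 : Real.sqrt (Real.cos θ) ^ 2 = Real.cos θ := Real.sq_sqrt hcpos.le
    nlinarith [h2, hh]
  have hnn : 0 ≤ 8 * Real.sqrt (Real.cos θ) * Real.cos (θ/2) := by
    have := Real.sqrt_nonneg (Real.cos θ)
    nlinarith [hhalfpos.le]
  have hden : 8 * Real.sqrt (Real.cos θ) * Real.cos (θ/2)
      = Real.sqrt (32 * Real.cos θ * (1 + Real.cos θ)) := by
    rw [← hsq, Real.sqrt_sq hnn]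
  exact ⟨h1, Real.cos_le_one θ, hcpos, by rw [hden], habspi⟩

private lemma main1 (θ : ℝ)
    (h : θ ∈ Set.Icc (-(Real.arccos (5/2 - Real.sqrt 6))) (Real.arccos (5/2 - Real.sqrt 6))) :
    Real.sqrt (5/8) ≤ (1 + 6 * Real.cos θ) / (8 * Real.sqrt (Real.cos θ) * Real.cos (θ / 2)) ∧
    (1 + 6 * Real.cos θ) / (8 * Real.sqrt (Real.cos θ) * Real.cos (θ / 2)) ≤ 1 := by
  obtain ⟨h1, h2, h3, h4, _⟩ := setup θ h
  rw [h4]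
  set c := Real.cos θ with hc
  have hprod : 0 < 32 * c * (1 + c) := by nlinarith
  have hDpos : 0 < Real.sqrt (32 * c * (1 + c)) := Real.sqrt_pos.2 hprod
  have hN : 0 ≤ 1 + 6 * c := by nlinarith
  constructor
  · rw [le_div_iff₀ hDpos, ← Real.sqrt_mul (by norm_num : (0:ℝ) ≤ 5/8)]
    have hle : 5/8 * (32 * c * (1 + c)) ≤ (1 + 6*c)^2 := by nlinarith [sq_nonneg (4*c - 1)]
    calc Real.sqrt (5/8 * (32 * c * (1 + c))) ≤ Real.sqrt ((1 + 6*c)^2) := Real.sqrt_le_sqrt hle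
      _ = 1 + 6*c := Real.sqrt_sq hN
  · rw [div_le_one hDpos]
    have hfac : 0 ≤ (c - (5/2 - Real.sqrt 6)) * (5/2 + Real.sqrt 6 - c) := by
      apply mul_nonneg (by linarith)
      nlinarith [s6_lb]
    have hle : (1 + 6*c)^2 ≤ 32 * c * (1 + c) := by nlinarith [s6_sq, hfac]
    calc (1 + 6*c) = Real.sqrt ((1 + 6*c)^2) := (Real.sqrt_sq hN).symm
      _ ≤ Real.sqrt (32 * c * (1 + c)) := Real.sqrt_le_sqrt hle

private lemma main2 (θ : ℝ)
    (h : θ ∈ Set.Icc (-(Real.arccos (5/2 - Real.sqrt 6))) (Real.arccos (5/2 - Real.sqrt 6))) :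
    (1 + 6 * Real.cos θ) / (8 * Real.sqrt (Real.cos θ) * Real.cos (θ / 2)) = 1 ↔
      θ = Real.arccos (5/2 - Real.sqrt 6) ∨ θ = -Real.arccos (5/2 - Real.sqrt 6) := by
  obtain ⟨h1, h2, h3, h4, h5⟩ := setup θ h
  rw [h4]
  have hprod : 0 < 32 * Real.cos θ * (1 + Real.cos θ) := by nlinarith
  have hDpos : 0 < Real.sqrt (32 * Real.cos θ * (1 + Real.cos θ)) := Real.sqrt_pos.2 hprod
  have hD2 : Real.sqrt (32 * Real.cos θ * (1 + Real.cos θ)) ^ 2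
      = 32 * Real.cos θ * (1 + Real.cos θ) := Real.sq_sqrt hprod.le
  rw [div_eq_one_iff_eq hDpos.ne']
  constructor
  · intro hND
    have heq : (1 + 6 * Real.cos θ)^2 = 32 * Real.cos θ * (1 + Real.cos θ) := by
      rw [hND]; exact hD2
    have hcb : Real.cos θ < 5/2 + Real.sqrt 6 := by nlinarith [s6_lb]
    have hcv : Real.cos θ = 5/2 - Real.sqrt 6 := by
      refine le_antisymm ?_ h1
      nlinarith [heq, s6_sq, hcb, h1]
    have hcos : Real.cos |θ| = Real.cos (Real.arccos (5/2 - Real.sqrt 6)) := by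
      rw [Real.cos_abs, hcv, cos_thetastar]
    have habseq : |θ| = Real.arccos (5/2 - Real.sqrt 6) :=
      Real.injOn_cos ⟨abs_nonneg θ, h5⟩ ⟨Real.arccos_nonneg _, Real.arccos_le_pi _⟩ hcos
    exact (abs_eq (Real.arccos_nonneg _)).1 habseq
  · intro hcase
    have hcv : Real.cos θ = 5/2 - Real.sqrt 6 := by
      rcases hcase with rfl | rfl
      · exact cos_thetastar
      · rw [Real.cos_neg]; exact cos_thetastar
    have heq : 32 * Real.cos θ * (1 + Real.cos θ) = (1 + 6 * Real.cos θ)^2 := by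
      rw [hcv]; nlinarith [s6_sq]
    have hN : 0 ≤ 1 + 6 * Real.cos θ := by nlinarith
    rw [heq, Real.sqrt_sq hN]

private lemma main3 (θ : ℝ)
    (h : θ ∈ Set.Icc (-(Real.arccos (5/2 - Real.sqrt 6))) (Real.arccos (5/2 - Real.sqrt 6))) :
    (1 + 6 * Real.cos θ) / (8 * Real.sqrt (Real.cos θ) * Real.cos (θ / 2)) = Real.sqrt (5/8) ↔
      θ = Real.arccos (1/4) ∨ θ = -Real.arccos (1/4) := by
  obtain ⟨h1, h2, h3, h4, h5⟩ := setup θ h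
  rw [h4]
  have hprod : 0 < 32 * Real.cos θ * (1 + Real.cos θ) := by nlinarith
  have hDpos : 0 < Real.sqrt (32 * Real.cos θ * (1 + Real.cos θ)) := Real.sqrt_pos.2 hprod
  have hE : Real.sqrt (5/8) * Real.sqrt (32 * Real.cos θ * (1 + Real.cos θ))
      = Real.sqrt (20 * Real.cos θ * (1 + Real.cos θ)) := by
    rw [← Real.sqrt_mul (by norm_num : (0:ℝ) ≤ 5/8)]
    ring_nf
  rw [div_eq_iff hDpos.ne', hE]
  constructor
  · intro hND
    have h20 : (0:ℝ) ≤ 20 * Real.cos θ * (1 + Real.cos θ) := by nlinarith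
    have heq : (1 + 6 * Real.cos θ)^2 = 20 * Real.cos θ * (1 + Real.cos θ) := by
      rw [hND]; exact Real.sq_sqrt h20
    have hcv : Real.cos θ = 1/4 := by nlinarith [sq_nonneg (4 * Real.cos θ - 1), heq]
    have habseq : |θ| = Real.arccos (1/4) := by
      have := Real.arccos_cos (abs_nonneg θ) h5
      rw [Real.cos_abs, hcv] at this
      exact this.symm
    exact (abs_eq (Real.arccos_nonneg _)).1 habseq
  · intro hcase
    have hcv : Real.cos θ = 1/4 := by
      rcases hcase with rfl | rfl
      · exact Real.cos_arccos (by norm_num) (by norm_num)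
      · rw [Real.cos_neg]; exact Real.cos_arccos (by norm_num) (by norm_num)
    rw [hcv]
    rw [show 20 * (1/4 : ℝ) * (1 + 1/4) = (1 + 6 * (1/4:ℝ))^2 by norm_num]
    rw [Real.sqrt_sq (by norm_num)]

theorem f_range_on_interval :
    let θs : ℝ := Real.arccos (5 / 2 - Real.sqrt 6)
    let f : ℝ → ℝ := fun θ =>
      (1 + 6 * Real.cos θ) / (8 * Real.sqrt (Real.cos θ) * Real.cos (θ / 2))
    (∀ θ ∈ Set.Icc (-θs) θs, Real.sqrt (5 / 8) ≤ f θ ∧ f θ ≤ 1) ∧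
    (∀ θ ∈ Set.Icc (-θs) θs, (f θ = 1 ↔ θ = θs ∨ θ = -θs)) ∧
    (∀ θ ∈ Set.Icc (-θs) θs,
      (f θ = Real.sqrt (5 / 8) ↔ θ = Real.arccos (1 / 4) ∨ θ = -Real.arccos (1 / 4))) := by
  exact ⟨fun θ hθ => main1 θ hθ, fun θ hθ => main2 θ hθ, fun θ hθ => main3 θ hθ⟩
end

section
/- Let (z, t) ∈ ℂ × ℝ lie on the unit Korányi sphere, i.e. |z|⁴ + t² = 1, and define j₂(z,t) = (z·(|z|² + i·t), −t), which also lies on the unit Korányi sphere. Then the fourth power of the Korányi distance between (z,t) and j₂(z,t) equals 4·(1 − |z|²)². -/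
open Complex Real

theorem symmetric_involution_distance (z : ℂ) (t : ℝ)
    (hsph : (‖z‖) ^ 4 + t ^ 2 = 1) :
    (kd (z, t) (z * ((((‖z‖) ^ 2 : ℝ) : ℂ) + (t : ℂ) * Complex.I), -t)) ^ 4 =
      4 * (1 - (‖z‖) ^ 2) ^ 2 := by
  set c : ℂ := (((‖z‖) ^ 2 : ℝ) : ℂ) + (t : ℂ) * Complex.I with hc
  set s : ℝ := (‖z‖) ^ 2 with hs
  have hnsq : Complex.normSq z = s := (Complex.sq_norm z).symm ▸ rfl
  have habs : (‖z - z * c‖) ^ 4 = s ^ 2 * ((1 - s) ^ 2 + t ^ 2) ^ 2 := by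
    have h1 : z - z * c = z * (1 - c) := by ring
    have h2 : (‖1 - c‖) ^ 2 = (1 - s) ^ 2 + t ^ 2 := by
      rw [Complex.sq_norm, Complex.normSq_apply]
      simp [hc, Complex.sub_re, Complex.sub_im]
      ring
    rw [h1, norm_mul]
    calc (‖z‖ * ‖1 - c‖) ^ 4
        = ((‖z‖) ^ 2) ^ 2 * ((‖1 - c‖) ^ 2) ^ 2 := by ring
      _ = s ^ 2 * ((1 - s) ^ 2 + t ^ 2) ^ 2 := by rw [h2, ← hs]
  have him : (z * (starRingEnd ℂ) (z * c)).im = -(s * t) := by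
    have : z * (starRingEnd ℂ) (z * c) = (Complex.normSq z : ℂ) * (starRingEnd ℂ) c := by
      rw [map_mul]
      rw [show z * ((starRingEnd ℂ) z * (starRingEnd ℂ) c)
          = (z * (starRingEnd ℂ) z) * (starRingEnd ℂ) c by ring, Complex.mul_conj]
    rw [this, hnsq]
    simp [hc]
  have hA : (0:ℝ) ≤ (‖z - z * c‖) ^ 4
      + (t - -t + 2 * (z * (starRingEnd ℂ) (z * c)).im) ^ 2 := by positivity
  have hval : (‖z - z * c‖) ^ 4
      + (t - -t + 2 * (z * (starRingEnd ℂ) (z * c)).im) ^ 2 = 4 * (1 - s) ^ 2 := by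
    rw [habs, him]
    have hsph' : s ^ 2 + t ^ 2 = 1 := by rw [hs]; nlinarith [hsph]
    linear_combination (4*s^2*(1-s) + s^2*(s^2+t^2-1) + 4*(1-s)^2) * hsph'
  rw [kd]
  simp only
  rw [hval, ← Real.rpow_natCast (_ ^ ((1:ℝ)/4)) 4, ← Real.rpow_mul (by positivity)]
  norm_num
end

section
/- Let p = (z, t) ∈ ℂ × ℝ satisfy |z|⁴ + t² = 1 and d(p, (1,0)) = 1, where d is the Korányi distance, and define j₃(p) = (conj(z)·(|z|² − i·t), t). Then, with c = |z|², the fourth power of the Korányi distance between p and j₃(p) equals d(p, j₃(p))⁴ = c·(−4c² + 20c − 1) / (2(1 + c)). -/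
open Complex Real

private lemma kd_pow4 (p q : ℂ × ℝ) :
    (kd p q) ^ 4 =
      (‖p.1 - q.1‖) ^ 4 +
        (p.2 - q.2 + 2 * (p.1 * (starRingEnd ℂ) q.1).im) ^ 2 := by
  unfold kd
  have hB : (0:ℝ) ≤ (‖p.1 - q.1‖) ^ 4 +
      (p.2 - q.2 + 2 * (p.1 * (starRingEnd ℂ) q.1).im) ^ 2 := by positivity
  rw [← Real.rpow_natCast (_ ^ ((1:ℝ)/4)) 4, ← Real.rpow_mul hB]
  norm_num

private lemma abs_pow4 (w : ℂ) : (‖w‖) ^ 4 = (w.re ^ 2 + w.im ^ 2) ^ 2 := by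
  rw [show (4:ℕ) = 2 * 2 from rfl, pow_mul, Complex.sq_norm, Complex.normSq_apply]
  ring

theorem vertical_involution_distance (z : ℂ) (t : ℝ)
    (hsph : (‖z‖) ^ 4 + t ^ 2 = 1)
    (hd : kd (z, t) ((1 : ℂ), (0 : ℝ)) = 1) :
    (kd (z, t) ((starRingEnd ℂ) z * ((((‖z‖) ^ 2 : ℝ) : ℂ) - (t : ℂ) * Complex.I), t)) ^ 4 =
      (‖z‖) ^ 2 * (-4 * ((‖z‖) ^ 2) ^ 2 + 20 * (‖z‖) ^ 2 - 1) /
        (2 * (1 + (‖z‖) ^ 2)) := by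
  have hsq : (‖z‖) ^ 2 = z.re ^ 2 + z.im ^ 2 := by
    rw [Complex.sq_norm, Complex.normSq_apply]; ring
  have H1 : (z.re ^ 2 + z.im ^ 2) ^ 2 + t ^ 2 = 1 := by
    rw [abs_pow4] at hsph; exact hsph
  have H2' : (kd (z, t) ((1 : ℂ), (0 : ℝ))) ^ 4 = 1 := by rw [hd]; norm_num
  rw [kd_pow4, abs_pow4] at H2'
  simp only [Complex.sub_re, Complex.sub_im, Complex.one_re, Complex.one_im,
    Complex.mul_im, Complex.mul_re,
    Complex.conj_re, Complex.conj_im, Complex.ofReal_re, Complex.ofReal_im,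
    Complex.I_re, Complex.I_im] at H2'
  have H2 : ((z.re - 1) ^ 2 + z.im ^ 2) ^ 2 + (t + 2 * z.im) ^ 2 = 1 := by
    linear_combination H2'
  rw [kd_pow4, abs_pow4, hsq]
  simp only [Complex.sub_re, Complex.sub_im, Complex.mul_re, Complex.mul_im,
    Complex.conj_re, Complex.conj_im, Complex.ofReal_re, Complex.ofReal_im,
    Complex.I_re, Complex.I_im]
  have hden : (2 * (1 + (z.re ^ 2 + z.im ^ 2)) : ℝ) ≠ 0 := by positivity
  rw [eq_div_iff hden]
  linear_combination
    (2 * (z.re^2+z.im^2) * (6*(z.re^2+z.im^2)+1) -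
      (z.re^2+z.im^2) * (6*(z.re^2+z.im^2) + 1 - 4*z.re*(1+(z.re^2+z.im^2)) + 4*t*z.im)) * H2 +
    (16*(z.re^2+z.im^2)*z.im^2 +
      2*(1+(z.re^2+z.im^2)) * (4*(z.re^2+z.im^2)^2 +
        (z.re^2+z.im^2) * (3*(z.re^2+z.im^2) + (z.re^2+z.im^2)*((z.re^2+z.im^2)^2+t^2)
          - 4*(2*z.re^2*(z.re^2+z.im^2) - 2*z.re*z.im*t - (z.re^2+z.im^2)^2)))
      - (2 * (z.re^2+z.im^2) * (6*(z.re^2+z.im^2)+1) -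
        (z.re^2+z.im^2) * (6*(z.re^2+z.im^2) + 1 - 4*z.re*(1+(z.re^2+z.im^2)) + 4*t*z.im))) * H1
end

section
/- There do not exist three distinct points p, q, r ∈ ℂ × ℝ, each lying on the unit Korányi sphere (|z|⁴ + t² = 1) and at Korányi distance 1 from (1, 0), such that d(p,q) = d(q,r) = d(p,r) = 1. -/
open Complex Real

private lemma quarter_pow_eq_one {A : ℝ} (h0 : 0 ≤ A) (h : A ^ ((1 : ℝ) / 4) = 1) :
    A = 1 := by
  have : A = (A ^ ((1 : ℝ) / 4)) ^ (4 : ℝ) := by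
    rw [← Real.rpow_mul h0]; norm_num
  rw [this, h, Real.one_rpow]

private lemma abs_pow_four (z : ℂ) :
    ‖z‖ ^ 4 = (z.re ^ 2 + z.im ^ 2) ^ 2 := by
  have : ‖z‖ ^ 4 = (‖z‖ ^ 2) ^ 2 := by ring
  rw [this, Complex.sq_norm, Complex.normSq_apply]; ring

/-- `kd p q = 1` unfolded to a polynomial identity in real coordinates. -/
private lemma kd_eq_one_iff_poly {p q : ℂ × ℝ} (h : kd p q = 1) :
    ((p.1.re - q.1.re) ^ 2 + (p.1.im - q.1.im) ^ 2) ^ 2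
      + (p.2 - q.2 + 2 * (p.1.im * q.1.re - p.1.re * q.1.im)) ^ 2 = 1 := by
  unfold kd at h
  have h0 : (0:ℝ) ≤ (‖p.1 - q.1‖) ^ 4 +
      (p.2 - q.2 + 2 * (p.1 * (starRingEnd ℂ) q.1).im) ^ 2 := by positivity
  have h1 := quarter_pow_eq_one h0 h
  rw [abs_pow_four] at h1
  simp only [Complex.sub_re, Complex.sub_im, Complex.mul_im, Complex.conj_re,
    Complex.conj_im] at h1
  linarith [h1, sq_nonneg (p.2 - q.2)]


private lemma four_sq_pos {c : Fin 4 → ℝ} (h : ∃ i, c i ≠ 0) :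
    0 < c 0 ^ 2 + c 1 ^ 2 + c 2 ^ 2 + c 3 ^ 2 := by
  obtain ⟨i, hi⟩ := h
  have h0 := sq_nonneg (c 0)
  have h1 := sq_nonneg (c 1)
  have h2 := sq_nonneg (c 2)
  have h3 := sq_nonneg (c 3)
  have hp : 0 < |c i| ^ 2 := pow_pos (abs_pos.mpr hi) 2
  rw [_root_.sq_abs] at hp
  fin_cases i <;>
    first
      | (have hp' : 0 < c 0 ^ 2 := hp; linarith)
      | (have hp' : 0 < c 1 ^ 2 := hp; linarith)
      | (have hp' : 0 < c 2 ^ 2 := hp; linarith)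
      | (have hp' : 0 < c 3 ^ 2 := hp; linarith)

set_option maxHeartbeats 1000000 in
theorem no_three_equilateral_on_curve :
    ¬ ∃ p q r : ℂ × ℝ, p ≠ q ∧ p ≠ r ∧ q ≠ r ∧
      (‖p.1‖) ^ 4 + p.2 ^ 2 = 1 ∧ kd p ((1 : ℂ), (0 : ℝ)) = 1 ∧
      (‖q.1‖) ^ 4 + q.2 ^ 2 = 1 ∧ kd q ((1 : ℂ), (0 : ℝ)) = 1 ∧
      (‖r.1‖) ^ 4 + r.2 ^ 2 = 1 ∧ kd r ((1 : ℂ), (0 : ℝ)) = 1 ∧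
      kd p q = 1 ∧ kd q r = 1 ∧ kd p r = 1 := by
  rintro ⟨p, q, r, -, -, -, hSp, hGp, hSq, hGq, hSr, hGr, hpq, hqr, hpr⟩
  -- real coordinates
  set x1 := p.1.re with hx1; set y1 := p.1.im with hy1; set t1 := p.2 with ht1
  set x2 := q.1.re with hx2; set y2 := q.1.im with hy2; set t2 := q.2 with ht2
  set x3 := r.1.re with hx3; set y3 := r.1.im with hy3; set t3 := r.2 with ht3
  -- sphere equations
  rw [abs_pow_four] at hSp hSq hSr
  -- distance-to-g equations
  have hG1 := kd_eq_one_iff_poly hGp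
  have hG2 := kd_eq_one_iff_poly hGq
  have hG3 := kd_eq_one_iff_poly hGr
  simp only [Complex.one_re, Complex.one_im] at hG1 hG2 hG3
  -- pairwise distance equations
  have hD12 := kd_eq_one_iff_poly hpq
  have hD23 := kd_eq_one_iff_poly hqr
  have hD13 := kd_eq_one_iff_poly hpr
  -- cubic features
  set X1 := x1 * (x1 ^ 2 + y1 ^ 2) - y1 * t1 with hX1
  set Y1 := y1 * (x1 ^ 2 + y1 ^ 2) + x1 * t1 with hY1
  set X2 := x2 * (x2 ^ 2 + y2 ^ 2) - y2 * t2 with hX2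
  set Y2 := y2 * (x2 ^ 2 + y2 ^ 2) + x2 * t2 with hY2
  set X3 := x3 * (x3 ^ 2 + y3 ^ 2) - y3 * t3 with hX3
  set Y3 := y3 * (x3 ^ 2 + y3 ^ 2) + x3 * t3 with hY3
  -- Gram relations:  Q(f_i,f_i) = -1 on the sphere
  have hQ11 : 6 * (x1^2+y1^2) * (x1^2+y1^2) - 2 * t1 * t1
      - 8 * (x1 * X1 + y1 * Y1) + 1 = -1 := by
    rw [hX1, hY1]; linear_combination (-2 : ℝ) * hSp
  have hQ22 : 6 * (x2^2+y2^2) * (x2^2+y2^2) - 2 * t2 * t2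
      - 8 * (x2 * X2 + y2 * Y2) + 1 = -1 := by
    rw [hX2, hY2]; linear_combination (-2 : ℝ) * hSq
  have hQ33 : 6 * (x3^2+y3^2) * (x3^2+y3^2) - 2 * t3 * t3
      - 8 * (x3 * X3 + y3 * Y3) + 1 = -1 := by
    rw [hX3, hY3]; linear_combination (-2 : ℝ) * hSr
  -- Q(f_0,f_i) = 0 where f_0 comes from g = (1,0)
  have hQ01 : 6 * (x1^2+y1^2) - 4 * (x1 + X1) + 1 = 0 := by
    rw [hX1]; linear_combination hG1 - hSp
  have hQ02 : 6 * (x2^2+y2^2) - 4 * (x2 + X2) + 1 = 0 := by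
    rw [hX2]; linear_combination hG2 - hSq
  have hQ03 : 6 * (x3^2+y3^2) - 4 * (x3 + X3) + 1 = 0 := by
    rw [hX3]; linear_combination hG3 - hSr
  -- Q(f_i,f_j) = 0 for the pairwise distances
  have hQ12 : 6 * (x1^2+y1^2) * (x2^2+y2^2) - 2 * t1 * t2
      - 4 * (X1 * x2 + x1 * X2) - 4 * (Y1 * y2 + y1 * Y2) + 1 = 0 := by
    rw [hX1, hY1, hX2, hY2]; linear_combination hD12 - hSp - hSq
  have hQ23 : 6 * (x2^2+y2^2) * (x3^2+y3^2) - 2 * t2 * t3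
      - 4 * (X2 * x3 + x2 * X3) - 4 * (Y2 * y3 + y2 * Y3) + 1 = 0 := by
    rw [hX2, hY2, hX3, hY3]; linear_combination hD23 - hSq - hSr
  have hQ13 : 6 * (x1^2+y1^2) * (x3^2+y3^2) - 2 * t1 * t3
      - 4 * (X1 * x3 + x1 * X3) - 4 * (Y1 * y3 + y1 * Y3) + 1 = 0 := by
    rw [hX1, hY1, hX3, hY3]; linear_combination hD13 - hSp - hSr
  -- four vectors in ℝ³ are linearly dependent
  have hdep : ¬ LinearIndependent ℝ
      (![![0, 2, 0],
         ![t1, x1 + X1, y1 + Y1],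
         ![t2, x2 + X2, y2 + Y2],
         ![t3, x3 + X3, y3 + Y3]] : Fin 4 → Fin 3 → ℝ) := by
    intro hli
    have := hli.fintype_card_le_finrank
    rw [Module.finrank_fin_fun] at this
    simp at this
  obtain ⟨c, hsum, i, hci⟩ := Fintype.not_linearIndependent_iff.mp hdep
  have hE : ∀ j : Fin 3, c 0 * (![(0:ℝ), 2, 0] j)
      + c 1 * (![t1, x1 + X1, y1 + Y1] j)
      + c 2 * (![t2, x2 + X2, y2 + Y2] j)
      + c 3 * (![t3, x3 + X3, y3 + Y3] j) = 0 := by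
    intro j
    have := congrFun hsum j
    simpa [Fin.sum_univ_four, Matrix.cons_val_zero, Matrix.cons_val_one] using this
  have hE1 := hE 0
  have hE2 := hE 1
  have hE3 := hE 2
  simp only [Matrix.cons_val_zero, Matrix.cons_val_one, Matrix.head_cons,
    Matrix.cons_val_two, Matrix.tail_cons] at hE1 hE2 hE3
  have hcpos : 0 < c 0 ^ 2 + c 1 ^ 2 + c 2 ^ 2 + c 3 ^ 2 := four_sq_pos ⟨i, hci⟩
  -- the grand identity: negative-definite Gram vs. only 3 negative squares
  have key : 6 * (c 0 * 1 + c 1 * (x1^2+y1^2) + c 2 * (x2^2+y2^2) + c 3 * (x3^2+y3^2)) ^ 2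
      + (c 0 + c 1 + c 2 + c 3) ^ 2
      + 2 * (c 1 * (x1 - X1) + c 2 * (x2 - X2) + c 3 * (x3 - X3)) ^ 2
      + 2 * (c 1 * (y1 - Y1) + c 2 * (y2 - Y2) + c 3 * (y3 - Y3)) ^ 2
      = -(c 0 ^ 2 + c 1 ^ 2 + c 2 ^ 2 + c 3 ^ 2) := by
    linear_combination (c 1 ^ 2) * hQ11 + (c 2 ^ 2) * hQ22 + (c 3 ^ 2) * hQ33
      + (2 * c 0 * c 1) * hQ01 + (2 * c 0 * c 2) * hQ02 + (2 * c 0 * c 3) * hQ03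
      + (2 * c 1 * c 2) * hQ12 + (2 * c 2 * c 3) * hQ23 + (2 * c 1 * c 3) * hQ13
      + (2 * (c 1 * t1 + c 2 * t2 + c 3 * t3)) * hE1
      + (2 * (c 0 * 2 + c 1 * (x1 + X1) + c 2 * (x2 + X2) + c 3 * (x3 + X3))) * hE2
      + (2 * (c 1 * (y1 + Y1) + c 2 * (y2 + Y2) + c 3 * (y3 + Y3))) * hE3
  linarith only [key, hcpos,
    sq_nonneg (c 0 * 1 + c 1 * (x1^2+y1^2) + c 2 * (x2^2+y2^2) + c 3 * (x3^2+y3^2)),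
    sq_nonneg (c 0 + c 1 + c 2 + c 3),
    sq_nonneg (c 1 * (x1 - X1) + c 2 * (x2 - X2) + c 3 * (x3 - X3)),
    sq_nonneg (c 1 * (y1 - Y1) + c 2 * (y2 - Y2) + c 3 * (y3 - Y3))]
end
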